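/- Suppose the cocycle (ψ,ϑ) is σ-periodic and (H1), (H2) with j = 1, (H3) and (COM3) hold. Then every isolated Lyapunov stable σ-periodic trajectory v* at q is asymptotically Lyapunov stable: there exists η > 0 such that every semi-trajectory u(t) = ψ^t(q,u₀) with |u₀ − v*(0)| < η satisfies u(t) − v*(t) → 0 as t → +∞. -/

import Mathlib

open MeasureTheory Set Bornology Filter Topology RealInnerProductSpace

noncomputable section

variable {Q H : Type*}

section Defs
variable [MetricSpace Q] [NormedAddCommGroup H] [InnerProductSpace ℝ H] [CompleteSpace H]

def IsFlow (ϑ : ℝ → Q → Q) : Prop :=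
  (∀ q, ϑ 0 q = q) ∧ (∀ t s q, ϑ (t + s) q = ϑ t (ϑ s q)) ∧
    Continuous fun p : ℝ × Q => ϑ p.1 p.2

def IsCocycle (ϑ : ℝ → Q → Q) (ψ : ℝ → Q → H → H) : Prop :=
  (∀ q u, ψ 0 q u = u) ∧
  (∀ t s : ℝ, 0 ≤ t → 0 ≤ s → ∀ q u, ψ (t + s) q u = ψ t (ϑ s q) (ψ s q u)) ∧
  ContinuousOn (fun p : ℝ × Q × H => ψ p.1 p.2.1 p.2.2) {p : ℝ × Q × H | 0 ≤ p.1}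

def IsCompleteTraj (ϑ : ℝ → Q → Q) (ψ : ℝ → Q → H → H) (q : Q) (u : ℝ → H) : Prop :=
  Continuous u ∧ ∀ t s : ℝ, 0 ≤ t → u (t + s) = ψ t (ϑ s q) (u s)

def IsAmenable (ν : ℝ) (u : ℝ → H) : Prop :=
  IntegrableOn (fun s : ℝ => Real.exp (2 * ν * s) * ‖u s‖ ^ 2) (Set.Iic (0:ℝ))

def amenSet (ϑ : ℝ → Q → Q) (ψ : ℝ → Q → H → H) (ν : ℝ) (q : Q) : Set H :=
  {u₀ | ∃ u : ℝ → H, IsCompleteTraj ϑ ψ q u ∧ IsAmenable ν u ∧ u 0 = u₀}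

structure HypH1 (P : H →L[ℝ] H) (Hplus Hminus : Submodule ℝ H) : Prop where
  selfAdj : IsSelfAdjoint P
  closed_plus : IsClosed (Hplus : Set H)
  orth : Hminus = Hplusᗮ
  inv_plus : ∀ u ∈ Hplus, P u ∈ Hplus
  inv_minus : ∀ u ∈ Hminus, P u ∈ Hminus
  pos : ∀ u ∈ Hplus, u ≠ 0 → (0:ℝ) < ⟪P u, u⟫
  neg : ∀ u ∈ Hminus, u ≠ 0 → ⟪P u, u⟫ < 0

def HypH2 (Hminus : Submodule ℝ H) (j : ℕ) : Prop :=
  FiniteDimensional ℝ Hminus ∧ Module.finrank ℝ Hminus = j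

def HypH3 (ψ : ℝ → Q → H → H) (P : H →L[ℝ] H) (δ ν : ℝ) : Prop :=
  0 < δ ∧ 0 < ν ∧ ∀ (q : Q) (u v : H) (l r : ℝ), 0 ≤ l → l ≤ r →
    Real.exp (2 * ν * r) * ⟪P (ψ r q u - ψ r q v), ψ r q u - ψ r q v⟫ -
      Real.exp (2 * ν * l) * ⟪P (ψ l q u - ψ l q v), ψ l q u - ψ l q v⟫ ≤
      -δ * ∫ s in l..r, Real.exp (2 * ν * s) * ‖ψ s q u - ψ s q v‖ ^ 2

def IsOrthProjOnto (Hminus : Submodule ℝ H) (Pi : H →L[ℝ] H) : Prop :=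
  (∀ u, Pi u ∈ Hminus) ∧ ∀ u, u - Pi u ∈ Hminusᗮ

def HypCOM2 (ψ : ℝ → Q → H → H) : Prop :=
  ∃ tc : ℝ, 0 < tc ∧ ∀ (q : Q) (s : Set H), IsBounded s → IsCompact (closure (ψ tc q '' s))

def HypCOM3 (ψ : ℝ → Q → H → H) : Prop :=
  ∀ (q : Q) (u₀ : H), IsBounded ((fun t => ψ t q u₀) '' Set.Ici (0:ℝ)) →
    IsCompact (closure ((fun t => ψ t q u₀) '' Set.Ici (0:ℝ)))

def LyapunovStable (ψ : ℝ → Q → H → H) (q : Q) (v : ℝ → H) : Prop :=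
  ∀ ε > 0, ∃ η > 0, ∀ u₀ : H, ‖u₀ - v 0‖ < η → ∀ t ≥ 0, ‖ψ t q u₀ - v t‖ < ε

end Defs

def circleFlow (σ : ℝ) : ℝ → AddCircle σ → AddCircle σ := fun t θ => θ + (t : AddCircle σ)

section Aux
variable [NormedAddCommGroup H] [InnerProductSpace ℝ H] [CompleteSpace H]

lemma exists_sep_vector (P : H →L[ℝ] H) (Hplus Hminus : Submodule ℝ H)
    (h1 : HypH1 P Hplus Hminus) (h2 : HypH2 Hminus 1) :
    ∃ e : H, ∀ d : H, ⟪P d, d⟫ < 0 → ⟪d, e⟫ ≠ 0 := by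
  obtain ⟨hfd, hrk⟩ := h2
  obtain ⟨v, hv0, hvspan⟩ := (finrank_eq_one_iff' (K := ℝ) (V := ↥Hminus)).mp hrk
  refine ⟨(v : H), fun d hneg hinner => ?_⟩
  have hd : d ∈ Hminusᗮ := by
    rw [Submodule.mem_orthogonal]
    intro w hw
    obtain ⟨c, hc⟩ := hvspan ⟨w, hw⟩
    have hw' : w = c • (v : H) := by
      have := congrArg (Subtype.val) hc
      simpa using this.symm
    rw [hw', real_inner_smul_left, real_inner_comm, hinner, mul_zero]
  rw [h1.orth] at hd
  haveI : CompleteSpace ↥Hplus := h1.closed_plus.completeSpace_coe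
  rw [Submodule.orthogonal_orthogonal] at hd
  rcases eq_or_ne d 0 with rfl | hd0
  · simp at hneg
  · exact absurd hneg (not_lt.mpr (h1.pos d hd hd0).le)

variable {σ : ℝ} {ψ : ℝ → AddCircle σ → H → H} {q : AddCircle σ}

lemma circle_nat_mul_coe (σ : ℝ) (k : ℕ) : ((k * σ : ℝ) : AddCircle σ) = 0 := by
  have h : ((k * σ : ℝ) : AddCircle σ) = (k : ℕ) • ((σ:ℝ) : AddCircle σ) := by
    rw [← nsmul_eq_mul]; norm_cast
  rw [h, AddCircle.coe_period, smul_zero]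

lemma circleFlow_zero (σ : ℝ) (θ : AddCircle σ) : circleFlow σ 0 θ = θ := by
  show θ + ((0:ℝ) : AddCircle σ) = θ
  norm_cast
  simp

lemma circleFlow_add_nat (σ : ℝ) (q : AddCircle σ) (s : ℝ) (k : ℕ) :
    circleFlow σ (s + k * σ) q = circleFlow σ s q := by
  show q + ((s + k * σ : ℝ) : AddCircle σ) = q + ((s:ℝ) : AddCircle σ)
  have : ((s + k * σ : ℝ) : AddCircle σ) = ((s:ℝ) : AddCircle σ) + ((k * σ : ℝ) : AddCircle σ) := by
    norm_cast
  rw [this, circle_nat_mul_coe, add_zero]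

lemma circleFlow_nat (σ : ℝ) (q : AddCircle σ) (k : ℕ) :
    circleFlow σ (k * σ) q = q := by
  have := circleFlow_add_nat σ q 0 k
  rwa [zero_add, circleFlow_zero] at this

def trajK (σ t : ℝ) : ℕ := ⌈(-t)/σ⌉₊

lemma trajK_nonneg (hσ : 0 < σ) (t : ℝ) : 0 ≤ t + trajK σ t * σ := by
  have h := Nat.le_ceil ((-t)/σ)
  rw [div_le_iff₀ hσ] at h
  have : (-t) ≤ (trajK σ t : ℝ) * σ := h
  linarith

def traj (σ : ℝ) (ψ : ℝ → AddCircle σ → H → H) (q : AddCircle σ) (g : ℕ → H) (t : ℝ) : H :=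
  ψ (t + trajK σ t * σ) q (g (trajK σ t))

lemma traj_eq (hσ : 0 < σ) (hcoc : IsCocycle (circleFlow σ) ψ) {g : ℕ → H}
    (hg : ∀ k, ψ σ q (g (k+1)) = g k) (k : ℕ) (t : ℝ) (ht : 0 ≤ t + k * σ) :
    ψ (t + k * σ) q (g k) = traj σ ψ q g t := by
  have step : ∀ (k : ℕ) (t : ℝ), 0 ≤ t + k*σ →
      ψ (t + k*σ) q (g k) = ψ (t + (k+1 : ℕ)*σ) q (g (k+1)) := by
    intro k t ht
    have h2 : (t + ((k:ℕ)+1 : ℕ)*σ) = (t + k*σ) + σ := by push_cast; ring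
    rw [h2, hcoc.2.1 (t + k*σ) σ ht hσ.le q (g (k+1))]
    have h3 : circleFlow σ σ q = q := by
      have := circleFlow_nat σ q 1; rwa [Nat.cast_one, one_mul] at this
    rw [h3, hg k]
  have up : ∀ (j k : ℕ) (t : ℝ), 0 ≤ t + k*σ →
      ψ (t + k*σ) q (g k) = ψ (t + (k+j : ℕ)*σ) q (g (k+j)) := by
    intro j
    induction j with
    | zero => intro k t ht; rfl
    | succ n ih =>
      intro k t ht
      rw [ih k t ht]
      have h4 : 0 ≤ t + (k+n : ℕ)*σ := by
        have : (k : ℝ)*σ ≤ ((k+n : ℕ) : ℝ)*σ := by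
          push_cast
          nlinarith [hσ.le, (Nat.cast_nonneg n : (0:ℝ) ≤ n)]
        linarith
      have := step (k+n) t h4
      rwa [show k + n + 1 = k + (n+1) by ring] at this
  set m := trajK σ t with hm
  rcases le_total k m with hkm | hmk
  · have := up (m - k) k t ht
    rw [Nat.add_sub_cancel' hkm] at this
    exact this
  · have := up (k - m) m t (trajK_nonneg hσ t)
    rw [Nat.add_sub_cancel' hmk] at this
    exact this.symm

lemma traj_nonneg_eq (hσ : 0 < σ) (hcoc : IsCocycle (circleFlow σ) ψ) {g : ℕ → H}
    (hg : ∀ k, ψ σ q (g (k+1)) = g k) (t : ℝ) (ht : 0 ≤ t) :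
    traj σ ψ q g t = ψ t q (g 0) := by
  have := traj_eq (q := q) hσ hcoc hg 0 t (by simpa using ht)
  rw [Nat.cast_zero, zero_mul, add_zero] at this
  exact this.symm

lemma traj_zero (hσ : 0 < σ) (hcoc : IsCocycle (circleFlow σ) ψ) {g : ℕ → H}
    (hg : ∀ k, ψ σ q (g (k+1)) = g k) :
    traj σ ψ q g 0 = g 0 := by
  rw [traj_nonneg_eq hσ hcoc hg 0 le_rfl, hcoc.1]

lemma traj_shift (hσ : 0 < σ) (hcoc : IsCocycle (circleFlow σ) ψ) {g : ℕ → H}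
    (hg : ∀ k, ψ σ q (g (k+1)) = g k) (s t : ℝ) (hst : s ≤ t) :
    traj σ ψ q g t = ψ (t - s) (circleFlow σ s q) (traj σ ψ q g s) := by
  set k := trajK σ s with hk
  have hs0 : 0 ≤ s + k*σ := trajK_nonneg hσ s
  have ht0 : 0 ≤ t + k*σ := by linarith
  rw [← traj_eq hσ hcoc hg k t ht0, ← traj_eq hσ hcoc hg k s hs0]
  have h1 : t + k*σ = (t - s) + (s + k*σ) := by ring
  rw [h1, hcoc.2.1 (t-s) (s+k*σ) (by linarith) hs0 q (g k), circleFlow_add_nat]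

lemma traj_continuous (hσ : 0 < σ) (hcoc : IsCocycle (circleFlow σ) ψ) {g : ℕ → H}
    (hg : ∀ k, ψ σ q (g (k+1)) = g k) :
    Continuous (traj σ ψ q g) := by
  rw [continuous_iff_continuousAt]
  intro t₀
  set k := trajK σ t₀ + 1 with hkdef
  have hk : 0 < t₀ + k*σ := by
    have := trajK_nonneg hσ t₀
    push_cast [hkdef]
    nlinarith
  have hcont : ContinuousAt (fun t : ℝ => ψ (t + k*σ) q (g k)) t₀ := by
    have hmem : {p : ℝ × AddCircle σ × H | 0 ≤ p.1} ∈ 𝓝 ((t₀ + k*σ : ℝ), q, g k) := by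
      have hopen : IsOpen {p : ℝ × AddCircle σ × H | 0 < p.1} :=
        isOpen_lt (f := fun _ : ℝ × AddCircle σ × H => (0:ℝ)) (g := Prod.fst)
          continuous_const continuous_fst
      have hx : ((t₀ + k*σ : ℝ), q, g k) ∈ {p : ℝ × AddCircle σ × H | 0 < p.1} := hk
      exact Filter.mem_of_superset (hopen.mem_nhds hx)
        (fun p (hp : (0:ℝ) < p.1) => le_of_lt hp)
    have h1 : ContinuousAt (fun p : ℝ × AddCircle σ × H => ψ p.1 p.2.1 p.2.2)
        ((t₀ + k*σ : ℝ), q, g k) := hcoc.2.2.continuousAt hmem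
    have h2 : ContinuousAt (fun t : ℝ => ((t + k*σ : ℝ), (q, g k))) t₀ := by fun_prop
    exact ContinuousAt.comp (g := fun p : ℝ × AddCircle σ × H => ψ p.1 p.2.1 p.2.2)
      (f := fun t : ℝ => ((t + k*σ : ℝ), (q, g k))) h1 h2
  apply hcont.congr
  have hopen : IsOpen {t : ℝ | 0 < t + k*σ} := by
    have : {t : ℝ | 0 < t + k*σ} = (fun t : ℝ => t + k*σ) ⁻¹' (Set.Ioi 0) := rfl
    rw [this]; exact (continuous_id.add continuous_const).isOpen_preimage _ isOpen_Ioi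
  apply Filter.eventuallyEq_of_mem (hopen.mem_nhds hk)
  intro t ht
  exact (traj_eq hσ hcoc hg k t (le_of_lt ht))



section Aux2
variable [NormedAddCommGroup H] [InnerProductSpace ℝ H] [CompleteSpace H]
variable {σ : ℝ} {ψ : ℝ → AddCircle σ → H → H} {q : AddCircle σ}
variable {P : H →L[ℝ] H} {δ ν : ℝ}

lemma traj_H3 (hσ : 0 < σ) (hcoc : IsCocycle (circleFlow σ) ψ)
    (h3 : HypH3 ψ P δ ν) {g₁ g₂ : ℕ → H}
    (hg₁ : ∀ k, ψ σ q (g₁ (k+1)) = g₁ k) (hg₂ : ∀ k, ψ σ q (g₂ (k+1)) = g₂ k)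
    (l r : ℝ) (hlr : l ≤ r) :
    Real.exp (2*ν*r) * ⟪P (traj σ ψ q g₁ r - traj σ ψ q g₂ r),
        traj σ ψ q g₁ r - traj σ ψ q g₂ r⟫
      - Real.exp (2*ν*l) * ⟪P (traj σ ψ q g₁ l - traj σ ψ q g₂ l),
        traj σ ψ q g₁ l - traj σ ψ q g₂ l⟫
      ≤ -δ * ∫ s in l..r, Real.exp (2*ν*s) *
          ‖traj σ ψ q g₁ s - traj σ ψ q g₂ s‖^2 := by
  set k := trajK σ l with hkdef
  have hl0 : 0 ≤ l + k*σ := trajK_nonneg hσ l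
  have hr0 : 0 ≤ r + k*σ := by linarith
  have key := h3.2.2 q (g₁ k) (g₂ k) (l + k*σ) (r + k*σ) hl0 (by linarith)
  rw [traj_eq hσ hcoc hg₁ k l hl0, traj_eq hσ hcoc hg₂ k l hl0,
      traj_eq hσ hcoc hg₁ k r hr0, traj_eq hσ hcoc hg₂ k r hr0] at key
  set E := Real.exp (2*ν*(k*σ)) with hE
  have hEpos : 0 < E := Real.exp_pos _
  -- transform the integral
  have hint : (∫ s in (l + k*σ)..(r + k*σ), Real.exp (2*ν*s) *
      ‖ψ s q (g₁ k) - ψ s q (g₂ k)‖^2)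
      = E * ∫ s in l..r, Real.exp (2*ν*s) * ‖traj σ ψ q g₁ s - traj σ ψ q g₂ s‖^2 := by
    have step1 : (∫ s in (l + k*σ)..(r + k*σ), Real.exp (2*ν*s) *
        ‖ψ s q (g₁ k) - ψ s q (g₂ k)‖^2)
        = ∫ s in (l + k*σ)..(r + k*σ), Real.exp (2*ν*s) *
            ‖traj σ ψ q g₁ (s - k*σ) - traj σ ψ q g₂ (s - k*σ)‖^2 := by
      apply intervalIntegral.integral_congr
      intro s hs
      rw [Set.uIcc_of_le (by linarith)] at hs
      have hs0 : 0 ≤ (s - k*σ) + k*σ := by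
        have := hs.1; linarith
      have e1 := traj_eq hσ hcoc hg₁ k (s - k*σ) hs0
      have e2 := traj_eq hσ hcoc hg₂ k (s - k*σ) hs0
      rw [sub_add_cancel] at e1 e2
      simp only [e1, e2]
    have step2 : (∫ s in (l + k*σ)..(r + k*σ), Real.exp (2*ν*s) *
        ‖traj σ ψ q g₁ (s - k*σ) - traj σ ψ q g₂ (s - k*σ)‖^2)
        = ∫ x in l..r, Real.exp (2*ν*(x + k*σ)) *
            ‖traj σ ψ q g₁ x - traj σ ψ q g₂ x‖^2 := by
      rw [← intervalIntegral.integral_comp_add_right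
        (fun s => Real.exp (2*ν*s) * ‖traj σ ψ q g₁ (s - k*σ) - traj σ ψ q g₂ (s - k*σ)‖^2)
        (k*σ)]
      apply intervalIntegral.integral_congr
      intro x _
      simp only [add_sub_cancel_right]
    have step3 : (∫ x in l..r, Real.exp (2*ν*(x + k*σ)) *
        ‖traj σ ψ q g₁ x - traj σ ψ q g₂ x‖^2)
        = ∫ x in l..r, E * (Real.exp (2*ν*x) *
            ‖traj σ ψ q g₁ x - traj σ ψ q g₂ x‖^2) := by
      apply intervalIntegral.integral_congr
      intro x _
      show Real.exp (2*ν*(x + k*σ)) * ‖traj σ ψ q g₁ x - traj σ ψ q g₂ x‖^2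
        = E * (Real.exp (2*ν*x) * ‖traj σ ψ q g₁ x - traj σ ψ q g₂ x‖^2)
      rw [hE, show 2*ν*(x + (k:ℝ)*σ) = 2*ν*x + 2*ν*((k:ℝ)*σ) from by ring, Real.exp_add]
      ring
    rw [step1, step2, step3, intervalIntegral.integral_const_mul]
  rw [hint] at key
  have hr' : Real.exp (2*ν*(r + k*σ)) = Real.exp (2*ν*r) * E := by
    rw [hE, ← Real.exp_add]; congr 1; ring
  have hl' : Real.exp (2*ν*(l + k*σ)) = Real.exp (2*ν*l) * E := by
    rw [hE, ← Real.exp_add]; congr 1; ring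
  rw [hr', hl'] at key
  set Vr := ⟪P (traj σ ψ q g₁ r - traj σ ψ q g₂ r), traj σ ψ q g₁ r - traj σ ψ q g₂ r⟫
  set Vl := ⟪P (traj σ ψ q g₁ l - traj σ ψ q g₂ l), traj σ ψ q g₁ l - traj σ ψ q g₂ l⟫
  set I := ∫ s in l..r, Real.exp (2*ν*s) * ‖traj σ ψ q g₁ s - traj σ ψ q g₂ s‖^2
  have h2 : E * (Real.exp (2*ν*r) * Vr - Real.exp (2*ν*l) * Vl) ≤ E * (-δ * I) := by
    calc E * (Real.exp (2*ν*r) * Vr - Real.exp (2*ν*l) * Vl)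
        = Real.exp (2*ν*r) * E * Vr - Real.exp (2*ν*l) * E * Vl := by ring
      _ ≤ -δ * (E * I) := key
      _ = E * (-δ * I) := by ring
  exact le_of_mul_le_mul_left h2 hEpos

lemma traj_V_neg (hσ : 0 < σ) (hcoc : IsCocycle (circleFlow σ) ψ)
    (h3 : HypH3 ψ P δ ν) {g₁ g₂ : ℕ → H}
    (hg₁ : ∀ k, ψ σ q (g₁ (k+1)) = g₁ k) (hg₂ : ∀ k, ψ σ q (g₂ (k+1)) = g₂ k)
    (C : ℝ) (hC : ∀ t, ‖traj σ ψ q g₁ t - traj σ ψ q g₂ t‖ ≤ C)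
    (t₀ r : ℝ) (ht₀r : t₀ ≤ r) (hD0 : traj σ ψ q g₁ t₀ - traj σ ψ q g₂ t₀ ≠ 0) :
    ⟪P (traj σ ψ q g₁ r - traj σ ψ q g₂ r), traj σ ψ q g₁ r - traj σ ψ q g₂ r⟫ < 0 := by
  have hδ := h3.1
  have hν := h3.2.1
  set D : ℝ → H := fun t => traj σ ψ q g₁ t - traj σ ψ q g₂ t with hDdef
  have hDcont : Continuous D :=
    (traj_continuous hσ hcoc hg₁).sub (traj_continuous hσ hcoc hg₂)
  set f : ℝ → ℝ := fun s => Real.exp (2*ν*s) * ‖D s‖^2 with hfdef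
  have hfcont : Continuous f := by fun_prop
  have hfnn : ∀ s, 0 ≤ f s := fun s => by positivity
  have hpos : 0 < ‖D t₀‖ := norm_pos_iff.mpr hD0
  obtain ⟨h, hh0, hball⟩ : ∃ h > 0, ∀ s ∈ Set.Icc (t₀ - h) t₀, ‖D t₀‖/2 ≤ ‖D s‖ := by
    obtain ⟨d, hd0, hd⟩ := Metric.continuousAt_iff.mp (hDcont.continuousAt (x := t₀))
      (‖D t₀‖/2) (by positivity)
    refine ⟨d/2, by positivity, fun s hs => ?_⟩
    have hdist : dist s t₀ < d := by
      rw [Real.dist_eq, abs_sub_lt_iff]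
      exact ⟨by linarith [hs.2], by linarith [hs.1]⟩
    have h2 := hd hdist
    rw [dist_eq_norm, norm_sub_rev] at h2
    have h3 := norm_sub_norm_le (D t₀) (D s)
    linarith
  set m := Real.exp (2*ν*(t₀ - h)) * (‖D t₀‖/2)^2 with hmdef
  have hm : 0 < m := by positivity
  have hmass : ∀ l, l ≤ t₀ - h → m * h ≤ ∫ s in l..r, f s := by
    intro l hl
    have hint : ∀ a b : ℝ, IntervalIntegrable f volume a b :=
      fun a b => hfcont.intervalIntegrable a b
    have i1 : m * h ≤ ∫ s in (t₀ - h)..t₀, f s := by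
      have hmono : ∀ x ∈ Set.Icc (t₀ - h) t₀, m ≤ f x := by
        intro x hx
        have e1 : Real.exp (2*ν*(t₀ - h)) ≤ Real.exp (2*ν*x) :=
          Real.exp_le_exp.mpr (by nlinarith [hx.1])
        have e2 : (‖D t₀‖/2)^2 ≤ ‖D x‖^2 := by
          have := hball x hx
          nlinarith [norm_nonneg (D x)]
        have e3 : (0:ℝ) ≤ Real.exp (2*ν*(t₀ - h)) := (Real.exp_pos _).le
        calc m = Real.exp (2*ν*(t₀ - h)) * (‖D t₀‖/2)^2 := hmdef
          _ ≤ Real.exp (2*ν*x) * ‖D x‖^2 := by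
              apply mul_le_mul e1 e2 (by positivity) (Real.exp_pos _).le
      calc m * h = (t₀ - (t₀ - h)) • m := by rw [smul_eq_mul]; ring
        _ = ∫ _ in (t₀ - h)..t₀, m := (intervalIntegral.integral_const m).symm
        _ ≤ ∫ s in (t₀ - h)..t₀, f s := by
            apply intervalIntegral.integral_mono_on (by linarith)
              (intervalIntegrable_const) (hint _ _) hmono
    have i2 : (0:ℝ) ≤ ∫ s in l..(t₀ - h), f s :=
      intervalIntegral.integral_nonneg hl (fun u _ => hfnn u)
    have i3 : (0:ℝ) ≤ ∫ s in t₀..r, f s :=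
      intervalIntegral.integral_nonneg ht₀r (fun u _ => hfnn u)
    have split1 := intervalIntegral.integral_add_adjacent_intervals
      (hint l (t₀ - h)) (hint (t₀ - h) t₀)
    have split2 := intervalIntegral.integral_add_adjacent_intervals
      (hint l t₀) (hint t₀ r)
    rw [← split2, ← split1]
    linarith
  -- bound on V along the difference
  have hC0 : 0 ≤ C := le_trans (norm_nonneg _) (hC 0)
  set M := ‖P‖ * C^2 + 1 with hMdef
  have hMpos : 0 < M := by positivity
  have hVle : ∀ t, ⟪P (D t), D t⟫ ≤ M := by
    intro t
    calc ⟪P (D t), D t⟫ ≤ ‖P (D t)‖ * ‖D t‖ := real_inner_le_norm _ _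
      _ ≤ (‖P‖ * ‖D t‖) * ‖D t‖ := by
          apply mul_le_mul_of_nonneg_right (P.le_opNorm _) (norm_nonneg _)
      _ ≤ M := by
          have h1 := hC t
          have h2 : (0:ℝ) ≤ ‖D t‖ := norm_nonneg _
          have h3 : (0:ℝ) ≤ ‖P‖ := norm_nonneg _
          have h4 : ‖D t‖ * ‖D t‖ ≤ C * C := mul_le_mul h1 h1 h2 hC0
          nlinarith
  set c₀ := m * h with hc₀def
  have hc₀ : 0 < c₀ := mul_pos hm hh0
  set l := min (t₀ - h) (Real.log (δ*c₀ / (2*M)) / (2*ν)) with hldef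
  have hl1 : l ≤ t₀ - h := min_le_left _ _
  have hexpl : Real.exp (2*ν*l) ≤ δ*c₀/(2*M) := by
    have h1 : l ≤ Real.log (δ*c₀/(2*M)) / (2*ν) := min_le_right _ _
    have h2 : 2*ν*l ≤ Real.log (δ*c₀/(2*M)) := by
      rw [le_div_iff₀ (by positivity)] at h1
      linarith
    calc Real.exp (2*ν*l) ≤ Real.exp (Real.log (δ*c₀/(2*M))) := Real.exp_le_exp.mpr h2
      _ = δ*c₀/(2*M) := Real.exp_log (by positivity)
  have key := traj_H3 hσ hcoc h3 hg₁ hg₂ l r (by linarith)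
  have hIc : c₀ ≤ ∫ s in l..r, f s := hmass l hl1
  have hEl : (0:ℝ) < Real.exp (2*ν*l) := Real.exp_pos _
  have hstep1 : Real.exp (2*ν*l) * ⟪P (D l), D l⟫ ≤ δ*c₀/2 := by
    calc Real.exp (2*ν*l) * ⟪P (D l), D l⟫ ≤ Real.exp (2*ν*l) * M :=
          mul_le_mul_of_nonneg_left (hVle l) hEl.le
      _ ≤ (δ*c₀/(2*M)) * M := mul_le_mul_of_nonneg_right hexpl hMpos.le
      _ = δ*c₀/2 := by field_simp
  have hstep2 : Real.exp (2*ν*r) * ⟪P (D r), D r⟫ ≤ -(δ*c₀/2) := by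
    have h4 : -δ * (∫ s in l..r, f s) ≤ -δ * c₀ := by nlinarith
    have h5 : Real.exp (2*ν*r) * ⟪P (D r), D r⟫
        ≤ Real.exp (2*ν*l) * ⟪P (D l), D l⟫ - δ * c₀ := by
      have := key
      simp only [hDdef, hfdef] at *
      linarith
    linarith
  have hEr : (0:ℝ) < Real.exp (2*ν*r) := Real.exp_pos _
  by_contra hcon
  push_neg at hcon
  have : (0:ℝ) ≤ Real.exp (2*ν*r) * ⟪P (D r), D r⟫ := mul_nonneg hEr.le (by
    simpa [hDdef] using hcon)
  nlinarith

lemma traj_zero_forward (hσ : 0 < σ) (hcoc : IsCocycle (circleFlow σ) ψ)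
    {g₁ g₂ : ℕ → H}
    (hg₁ : ∀ k, ψ σ q (g₁ (k+1)) = g₁ k) (hg₂ : ∀ k, ψ σ q (g₂ (k+1)) = g₂ k)
    (r t : ℝ) (hrt : r ≤ t) (h : traj σ ψ q g₁ r = traj σ ψ q g₂ r) :
    traj σ ψ q g₁ t = traj σ ψ q g₂ t := by
  rw [traj_shift hσ hcoc hg₁ r t hrt, traj_shift hσ hcoc hg₂ r t hrt, h]

lemma traj_V_neg_all (hσ : 0 < σ) (hcoc : IsCocycle (circleFlow σ) ψ)
    (h3 : HypH3 ψ P δ ν) {g₁ g₂ : ℕ → H}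
    (hg₁ : ∀ k, ψ σ q (g₁ (k+1)) = g₁ k) (hg₂ : ∀ k, ψ σ q (g₂ (k+1)) = g₂ k)
    (C : ℝ) (hC : ∀ t, ‖traj σ ψ q g₁ t - traj σ ψ q g₂ t‖ ≤ C)
    (hne : traj σ ψ q g₁ 0 ≠ traj σ ψ q g₂ 0) (r : ℝ) :
    ⟪P (traj σ ψ q g₁ r - traj σ ψ q g₂ r), traj σ ψ q g₁ r - traj σ ψ q g₂ r⟫ < 0 := by
  have hne0 : traj σ ψ q g₁ 0 - traj σ ψ q g₂ 0 ≠ 0 := sub_ne_zero_of_ne hne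
  rcases le_or_gt 0 r with hr | hr
  · exact traj_V_neg hσ hcoc h3 hg₁ hg₂ C hC 0 r hr hne0
  · have hDr : traj σ ψ q g₁ r - traj σ ψ q g₂ r ≠ 0 := by
      intro h0
      exact hne (traj_zero_forward hσ hcoc hg₁ hg₂ r 0 hr.le (sub_eq_zero.mp h0))
    exact traj_V_neg hσ hcoc h3 hg₁ hg₂ C hC r r le_rfl hDr

end Aux2
end Aux


/-- Proposition 5: for a σ-periodic cocycle under (H1), (H2) with `j = 1`, (H3) and
(COM3), every isolated Lyapunov stable σ-periodic trajectory is asymptotically Lyapunov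
stable. -/
theorem isolated_stable_is_asymptotically_stable
    {H : Type*} [NormedAddCommGroup H] [InnerProductSpace ℝ H]
    [CompleteSpace H] [TopologicalSpace.SeparableSpace H]
    (σ : ℝ) (hσ : 0 < σ)
    (ψ : ℝ → AddCircle σ → H → H)
    (hcoc : IsCocycle (circleFlow σ) ψ)
    (P : H →L[ℝ] H) (Hplus Hminus : Submodule ℝ H)
    (h1 : HypH1 P Hplus Hminus)
    (h2 : HypH2 Hminus 1)
    (δ ν : ℝ) (h3 : HypH3 ψ P δ ν)
    (hcom3 : HypCOM3 ψ)
    (q : AddCircle σ) (v : ℝ → H)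
    (hv : IsCompleteTraj (circleFlow σ) ψ q v)
    (hvper : ∀ t : ℝ, v (t + σ) = v t)
    (hisolated : ∃ ε > (0:ℝ), ∀ w : ℝ → H, IsCompleteTraj (circleFlow σ) ψ q w →
      (∀ t : ℝ, w (t + σ) = w t) → ‖w 0 - v 0‖ < ε → w 0 = v 0)
    (hstable : LyapunovStable ψ q v) :
    ∃ η > (0:ℝ), ∀ u₀ : H, ‖u₀ - v 0‖ < η →
      Tendsto (fun t : ℝ => ψ t q u₀ - v t) atTop (𝓝 0) := by
  classical
  obtain ⟨εiso, hεiso, hiso⟩ := hisolated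
  obtain ⟨e, he⟩ := exists_sep_vector P Hplus Hminus h1 h2
  -- periodicity facts
  have hvper' : ∀ (t : ℝ) (k : ℕ), v (t + k*σ) = v t := by
    intro t k
    induction k with
    | zero => simp
    | succ n ih =>
      have h1 : t + ((n:ℕ)+1 : ℕ)*σ = (t + n*σ) + σ := by push_cast; ring
      rw [h1, hvper, ih]
  have hvψ : ∀ s : ℝ, 0 ≤ s → v s = ψ s q (v 0) := by
    intro s hs
    have h1 := hv.2 s 0 hs
    rw [add_zero] at h1
    rw [h1, circleFlow_zero]
  have hfixv0 : ψ σ q (v 0) = v 0 := by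
    rw [← hvψ σ hσ.le]
    have h1 := hvper' 0 1
    simpa using h1
  -- stability constants
  set ε₂ := εiso / 2 with hε₂def
  have hε₂pos : 0 < ε₂ := by positivity
  obtain ⟨η₂₀, hη₂₀, hstab₂⟩ := hstable ε₂ hε₂pos
  set η₂ := min η₂₀ εiso with hη₂def
  have hη₂pos : 0 < η₂ := lt_min hη₂₀ hεiso
  have hη₂iso : η₂ ≤ εiso := min_le_right _ _
  have hstab₂' : ∀ u₁ : H, ‖u₁ - v 0‖ < η₂ → ∀ t ≥ 0, ‖ψ t q u₁ - v t‖ < ε₂ :=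
    fun u₁ hh => hstab₂ u₁ (lt_of_lt_of_le hh (min_le_left _ _))
  set ε₁ := η₂ / 2 with hε₁def
  have hε₁pos : 0 < ε₁ := by positivity
  obtain ⟨η₁, hη₁, hstab₁⟩ := hstable ε₁ hε₁pos
  refine ⟨η₁, hη₁, fun u₀ hu₀ => ?_⟩
  have hworbit : ∀ t ≥ (0:ℝ), ‖ψ t q u₀ - v t‖ < ε₁ := hstab₁ u₀ hu₀
  -- v is bounded
  obtain ⟨B, hB⟩ : ∃ B, ∀ t, ‖v t‖ ≤ B := by
    obtain ⟨s₀, _, hmax⟩ := isCompact_Icc.exists_isMaxOn (Set.nonempty_Icc.mpr hσ.le)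
      ((continuous_norm.comp hv.1).continuousOn (s := Set.Icc 0 σ))
    refine ⟨‖v s₀‖, fun t => ?_⟩
    have hper : Function.Periodic v σ := hvper
    obtain ⟨y, hy, hyeq⟩ := hper.exists_mem_Ico₀ hσ t
    rw [hyeq]
    exact hmax (Set.Ico_subset_Icc_self hy)
  -- compactness of the orbit closure
  have hwBd : IsBounded ((fun t => ψ t q u₀) '' Set.Ici (0:ℝ)) := by
    rw [isBounded_iff_forall_norm_le]
    refine ⟨B + ε₁, ?_⟩
    rintro y ⟨t, ht, rfl⟩
    have h1 := hworbit t ht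
    have h2 := hB t
    have h3 : ‖ψ t q u₀‖ ≤ ‖ψ t q u₀ - v t‖ + ‖v t‖ := by
      have := norm_add_le (ψ t q u₀ - v t) (v t)
      rwa [sub_add_cancel] at this
    linarith
  have hKcpt := hcom3 q u₀ hwBd
  set K := closure ((fun t => ψ t q u₀) '' Set.Ici (0:ℝ)) with hKdef
  set x : ℕ → H := fun n => ψ (n*σ) q u₀ with hxdef
  have hxK : ∀ n, x n ∈ K :=
    fun n => subset_closure ⟨n*σ, Set.mem_Ici.mpr (mul_nonneg (Nat.cast_nonneg n) hσ.le), rfl⟩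
  -- continuity of the period map
  have hTcont : Continuous (fun a : H => ψ σ q a) := by
    rw [continuous_iff_continuousAt]
    intro a
    have hopen : IsOpen {p : ℝ × AddCircle σ × H | 0 < p.1} :=
      isOpen_lt (f := fun _ : ℝ × AddCircle σ × H => (0:ℝ)) (g := Prod.fst)
        continuous_const continuous_fst
    have hx0 : ((σ:ℝ), q, a) ∈ {p : ℝ × AddCircle σ × H | 0 < p.1} := hσ
    have hmem : {p : ℝ × AddCircle σ × H | 0 ≤ p.1} ∈ 𝓝 ((σ:ℝ), q, a) :=
      Filter.mem_of_superset (hopen.mem_nhds hx0) (fun p (hp : (0:ℝ) < p.1) => le_of_lt hp)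
    have hc1 : ContinuousAt (fun p : ℝ × AddCircle σ × H => ψ p.1 p.2.1 p.2.2)
      ((σ:ℝ), q, a) := hcoc.2.2.continuousAt hmem
    have hc2 : ContinuousAt (fun b : H => ((σ:ℝ), (q, b))) a := by fun_prop
    exact ContinuousAt.comp (g := fun p : ℝ × AddCircle σ × H => ψ p.1 p.2.1 p.2.2)
      (f := fun b : H => ((σ:ℝ), (q, b))) hc1 hc2
  have hTx : ∀ n, ψ σ q (x n) = x (n+1) := by
    intro n
    have h1 := hcoc.2.1 σ (n*σ) hσ.le (mul_nonneg (Nat.cast_nonneg n) hσ.le) q u₀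
    rw [circleFlow_nat] at h1
    rw [hxdef]
    simp only
    rw [← h1]
    congr 1
    push_cast; ring
  -- the omega-limit set of the discrete orbit
  set Ω : Set H := {y | ClusterPt y (Filter.map x atTop)} with hΩdef
  have hmapK : Filter.map x atTop ≤ 𝓟 K := by
    rw [Filter.le_principal_iff, Filter.mem_map]
    exact Filter.Eventually.of_forall hxK
  have hΩclosed : IsClosed Ω := isClosed_setOf_clusterPt
  have hΩsub : Ω ⊆ K := by
    intro y hy
    have h1 : ClusterPt y (𝓟 K) := hy.mono hmapK
    have h2 := mem_closure_iff_clusterPt.mpr h1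
    rwa [hKdef, closure_closure] at h2
  have hΩcpt : IsCompact Ω := hKcpt.of_isClosed_subset hΩclosed hΩsub
  haveI : (Filter.map x atTop).NeBot := (Filter.map_neBot_iff x).mpr atTop_neBot
  have hΩne : Ω.Nonempty := by
    obtain ⟨y, _, hy⟩ := hKcpt hmapK
    exact ⟨y, hy⟩
  have hΩball : ∀ a ∈ Ω, ‖a - v 0‖ ≤ ε₁ := by
    intro a ha
    have hsub : Set.range x ⊆ Metric.closedBall (v 0) ε₁ := by
      rintro _ ⟨n, rfl⟩
      rw [Metric.mem_closedBall, dist_eq_norm]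
      have h1 := hworbit (n*σ) (mul_nonneg (Nat.cast_nonneg n) hσ.le)
      have h2 : v ((n:ℝ)*σ) = v 0 := by
        have := hvper' 0 n; rwa [zero_add] at this
      rw [h2] at h1
      exact h1.le
    have h3 : a ∈ closure (Set.range x) := mem_closure_iff_clusterPt.mpr
      (ha.mono (Filter.le_principal_iff.mpr Filter.range_mem_map))
    have h4 := closure_minimal hsub Metric.isClosed_closedBall h3
    rwa [Metric.mem_closedBall, dist_eq_norm] at h4
  have hΩball' : ∀ a ∈ Ω, ‖a - v 0‖ < η₂ := fun a ha =>
    lt_of_le_of_lt (hΩball a ha) (by rw [hε₁def]; linarith)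
  -- invariance of Ω
  have hmapshift : Filter.map (fun n => x (n+1)) atTop = Filter.map x atTop := by
    have h1 : (fun n => x (n+1)) = x ∘ (fun n => n + 1) := rfl
    rw [h1, ← Filter.map_map, Filter.map_add_atTop_eq_nat]
  have hfwd : ∀ a ∈ Ω, ψ σ q a ∈ Ω := by
    intro a ha
    have h1 : ClusterPt (ψ σ q a) (Filter.map (fun b => ψ σ q b) (Filter.map x atTop)) :=
      ha.map hTcont.continuousAt Filter.tendsto_map
    rw [Filter.map_map] at h1
    have h2 : ((fun b => ψ σ q b) ∘ x) = fun n => x (n+1) := funext hTx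
    rw [h2, hmapshift] at h1
    exact h1
  have hbwd : ∀ a ∈ Ω, ∃ b ∈ Ω, ψ σ q b = a := by
    intro a ha
    set Pr : ℕ → H × H := fun n => (x n, x (n+1)) with hPrdef
    have hshift : ClusterPt a (Filter.map (fun n => x (n+1)) atTop) := by
      rwa [hmapshift]
    have hsnd : Filter.map (fun n => x (n+1)) atTop
        = Filter.map Prod.snd (Filter.map Pr atTop) := by
      rw [Filter.map_map]; rfl
    set F : Filter (H × H) := Filter.map Pr atTop ⊓ Filter.comap Prod.snd (𝓝 a) with hFdef
    haveI hFne : F.NeBot := by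
      rw [← Filter.map_neBot_iff Prod.snd, hFdef, Filter.push_pull]
      have h1 : (𝓝 a ⊓ Filter.map (fun n => x (n+1)) atTop).NeBot := hshift
      rw [hsnd, inf_comm] at h1
      exact h1
    have hFK : F ≤ 𝓟 (K ×ˢ K) := by
      refine le_trans inf_le_left ?_
      rw [Filter.le_principal_iff, Filter.mem_map]
      exact Filter.Eventually.of_forall (fun n => ⟨hxK n, hxK (n+1)⟩)
    obtain ⟨bc, _, hbc⟩ := (hKcpt.prod hKcpt) hFK
    obtain ⟨b, c⟩ := bc
    have hbcPr : ClusterPt (b, c) (Filter.map Pr atTop) := hbc.mono inf_le_left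
    have hgraph : c = ψ σ q b := by
      have h5 : (b, c) ∈ closure (Set.range Pr) := mem_closure_iff_clusterPt.mpr
        (hbcPr.mono (Filter.le_principal_iff.mpr Filter.range_mem_map))
      have hclosed : IsClosed {p : H × H | p.2 = ψ σ q p.1} :=
        isClosed_eq continuous_snd (hTcont.comp continuous_fst)
      have hsubg : Set.range Pr ⊆ {p : H × H | p.2 = ψ σ q p.1} := by
        rintro _ ⟨n, rfl⟩
        exact (hTx n).symm
      exact closure_minimal hsubg hclosed h5
    have hca : c = a := by
      have h6 : ClusterPt (b, c) (Filter.comap Prod.snd (𝓝 a)) := hbc.mono inf_le_right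
      have h7 : ClusterPt c (𝓝 a) :=
        h6.map continuous_snd.continuousAt Filter.tendsto_comap
      exact eq_of_nhds_neBot h7
    have hbΩ : b ∈ Ω := by
      have h8 : ClusterPt b (Filter.map Prod.fst (Filter.map Pr atTop)) :=
        hbcPr.map continuous_fst.continuousAt Filter.tendsto_map
      rw [Filter.map_map] at h8
      exact h8
    exact ⟨b, hbΩ, by rw [← hgraph, hca]⟩
  -- choice of backward orbits
  have hpre : ∀ a : H, ∃ b : H, a ∈ Ω → (b ∈ Ω ∧ ψ σ q b = a) := by
    intro a
    by_cases h : a ∈ Ω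
    · obtain ⟨b, hb1, hb2⟩ := hbwd a h
      exact ⟨b, fun _ => ⟨hb1, hb2⟩⟩
    · exact ⟨a, fun h' => absurd h' h⟩
  choose pre hpre using hpre
  set G : H → ℕ → H := fun a k => pre^[k] a with hGdef
  have hG0 : ∀ a, G a 0 = a := fun a => rfl
  have hGmem : ∀ a ∈ Ω, ∀ k, G a k ∈ Ω := by
    intro a ha k
    induction k with
    | zero => exact ha
    | succ n ih =>
      have h1 : G a (n+1) = pre (G a n) := Function.iterate_succ_apply' pre n a
      rw [h1]
      exact (hpre (G a n) ih).1
  have hGstep : ∀ a ∈ Ω, ∀ k, ψ σ q (G a (k+1)) = G a k := by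
    intro a ha k
    have h1 : G a (k+1) = pre (G a k) := Function.iterate_succ_apply' pre k a
    rw [h1]
    exact (hpre (G a k) (hGmem a ha k)).2
  have hGsmall : ∀ a ∈ Ω, ∀ k, ‖G a k - v 0‖ < η₂ :=
    fun a ha k => hΩball' _ (hGmem a ha k)
  -- boundedness of complete trajectories built from backward orbits
  have htrajbd : ∀ g : ℕ → H, (∀ k, ‖g k - v 0‖ < η₂) → (∀ k, ψ σ q (g (k+1)) = g k) →
      ∀ t, ‖traj σ ψ q g t - v t‖ < ε₂ := by
    intro g hgs hgo t
    have hk0 := trajK_nonneg hσ t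
    have h1 := hstab₂' (g (trajK σ t)) (hgs _) (t + trajK σ t * σ) hk0
    rw [traj_eq hσ hcoc hgo _ t hk0] at h1
    rwa [hvper' t _] at h1
  have hDbd : ∀ g₁ g₂ : ℕ → H, (∀ k, ‖g₁ k - v 0‖ < η₂) → (∀ k, ψ σ q (g₁ (k+1)) = g₁ k) →
      (∀ k, ‖g₂ k - v 0‖ < η₂) → (∀ k, ψ σ q (g₂ (k+1)) = g₂ k) →
      ∀ t, ‖traj σ ψ q g₁ t - traj σ ψ q g₂ t‖ ≤ 2*ε₂ := by
    intro g₁ g₂ hb1 hb2 hb3 hb4 t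
    have c1 := htrajbd g₁ hb1 hb2 t
    have c2 := htrajbd g₂ hb3 hb4 t
    have h5 : traj σ ψ q g₁ t - traj σ ψ q g₂ t
        = (traj σ ψ q g₁ t - v t) - (traj σ ψ q g₂ t - v t) := by abel
    rw [h5]
    have := norm_sub_le (traj σ ψ q g₁ t - v t) (traj σ ψ q g₂ t - v t)
    linarith
  -- sign machinery
  have hsign : ∀ g₁ g₂ : ℕ → H, (∀ k, ‖g₁ k - v 0‖ < η₂) → (∀ k, ψ σ q (g₁ (k+1)) = g₁ k) →
      (∀ k, ‖g₂ k - v 0‖ < η₂) → (∀ k, ψ σ q (g₂ (k+1)) = g₂ k) →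
      g₁ 0 ≠ g₂ 0 →
      (∀ t, ⟪traj σ ψ q g₁ t - traj σ ψ q g₂ t, e⟫ ≠ 0) ∧
      (∀ s t : ℝ, 0 < ⟪traj σ ψ q g₁ s - traj σ ψ q g₂ s, e⟫ →
        0 < ⟪traj σ ψ q g₁ t - traj σ ψ q g₂ t, e⟫) := by
    intro g₁ g₂ hs1 ho1 hs2 ho2 hne
    have hne' : traj σ ψ q g₁ 0 ≠ traj σ ψ q g₂ 0 := by
      rw [traj_zero hσ hcoc ho1, traj_zero hσ hcoc ho2]; exact hne
    have hVneg := traj_V_neg_all hσ hcoc h3 ho1 ho2 (2*ε₂)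
      (hDbd g₁ g₂ hs1 ho1 hs2 ho2) hne'
    have hcne : ∀ t, ⟪traj σ ψ q g₁ t - traj σ ψ q g₂ t, e⟫ ≠ 0 :=
      fun t => he _ (hVneg t)
    refine ⟨hcne, fun s t hspos => ?_⟩
    by_contra hc
    push_neg at hc
    have htneg : ⟪traj σ ψ q g₁ t - traj σ ψ q g₂ t, e⟫ < 0 := lt_of_le_of_ne hc (hcne t)
    have hccont : Continuous (fun τ => ⟪traj σ ψ q g₁ τ - traj σ ψ q g₂ τ, e⟫) :=
      Continuous.inner
        ((traj_continuous hσ hcoc ho1).sub (traj_continuous hσ hcoc ho2)) continuous_const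
    have h0mem : (0:ℝ) ∈ Set.uIcc (⟪traj σ ψ q g₁ t - traj σ ψ q g₂ t, e⟫)
        (⟪traj σ ψ q g₁ s - traj σ ψ q g₂ s, e⟫) := by
      rw [Set.mem_uIcc]; left; exact ⟨htneg.le, hspos.le⟩
    obtain ⟨τ, _, hτ⟩ := intermediate_value_uIcc hccont.continuousOn h0mem
    exact hcne τ hτ
  have hpairzero : ∀ a ∈ Ω, ∀ b ∈ Ω, a ≠ b → ⟪a - b, e⟫ ≠ 0 := by
    intro a ha b hb hne
    have h1 := (hsign (G a) (G b) (hGsmall a ha) (hGstep a ha) (hGsmall b hb) (hGstep b hb)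
      (by rw [hG0, hG0]; exact hne)).1 0
    rwa [traj_zero hσ hcoc (hGstep a ha), traj_zero hσ hcoc (hGstep b hb), hG0, hG0] at h1
  have hord : ∀ a ∈ Ω, ∀ b ∈ Ω, 0 < ⟪a - b, e⟫ → 0 < ⟪ψ σ q a - ψ σ q b, e⟫ := by
    intro a ha b hb hab
    have hne : a ≠ b := by
      intro h
      rw [h, sub_self] at hab
      simp at hab
    have h2 := (hsign (G a) (G b) (hGsmall a ha) (hGstep a ha) (hGsmall b hb) (hGstep b hb)
      (by rw [hG0, hG0]; exact hne)).2 0 σ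
    have e0a : traj σ ψ q (G a) 0 = a := by rw [traj_zero hσ hcoc (hGstep a ha), hG0]
    have e0b : traj σ ψ q (G b) 0 = b := by rw [traj_zero hσ hcoc (hGstep b hb), hG0]
    have eσa : traj σ ψ q (G a) σ = ψ σ q a := by
      rw [traj_nonneg_eq hσ hcoc (hGstep a ha) σ hσ.le, hG0]
    have eσb : traj σ ψ q (G b) σ = ψ σ q b := by
      rw [traj_nonneg_eq hσ hcoc (hGstep b hb) σ hσ.le, hG0]
    rw [e0a, e0b, eσa, eσb] at h2
    exact h2 hab
  -- the extreme points of Ω are fixed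
  have hφcont : Continuous (fun y : H => ⟪y, e⟫) :=
    Continuous.inner continuous_id continuous_const
  obtain ⟨ymax, hymaxΩ, hymax⟩ := hΩcpt.exists_isMaxOn hΩne hφcont.continuousOn
  obtain ⟨ymin, hyminΩ, hymin⟩ := hΩcpt.exists_isMinOn hΩne hφcont.continuousOn
  have hfixmax : ψ σ q ymax = ymax := by
    obtain ⟨z, hzΩ, hz⟩ := hbwd ymax hymaxΩ
    rcases eq_or_ne z ymax with rfl | hne
    · exact hz
    · have h1 : ⟪z, e⟫ ≤ ⟪ymax, e⟫ := hymax hzΩ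
      have h2 : ⟪z - ymax, e⟫ ≠ 0 := hpairzero z hzΩ ymax hymaxΩ hne
      rw [inner_sub_left] at h2
      have h3 : 0 < ⟪ymax - z, e⟫ := by
        rw [inner_sub_left]
        rcases lt_or_gt_of_ne h2 with hlt | hgt
        · linarith
        · linarith
      have h4 := hord ymax hymaxΩ z hzΩ h3
      rw [hz] at h4
      have h5 : ⟪ψ σ q ymax, e⟫ ≤ ⟪ymax, e⟫ := hymax (hfwd ymax hymaxΩ)
      rw [inner_sub_left] at h4
      linarith
  have hfixmin : ψ σ q ymin = ymin := by
    obtain ⟨z, hzΩ, hz⟩ := hbwd ymin hyminΩ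
    rcases eq_or_ne z ymin with rfl | hne
    · exact hz
    · have h1 : ⟪ymin, e⟫ ≤ ⟪z, e⟫ := hymin hzΩ
      have h2 : ⟪z - ymin, e⟫ ≠ 0 := hpairzero z hzΩ ymin hyminΩ hne
      rw [inner_sub_left] at h2
      have h3 : 0 < ⟪z - ymin, e⟫ := by
        rw [inner_sub_left]
        rcases lt_or_gt_of_ne h2 with hlt | hgt
        · linarith
        · linarith
      have h4 := hord z hzΩ ymin hyminΩ h3
      rw [hz] at h4
      have h5 : ⟪ymin, e⟫ ≤ ⟪ψ σ q ymin, e⟫ := hymin (hfwd ymin hyminΩ)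
      rw [inner_sub_left] at h4
      linarith
  -- a fixed point of the period map in Ω must be v 0
  have hfixeq : ∀ p ∈ Ω, ψ σ q p = p → p = v 0 := by
    intro p hpΩ hfp
    set gp : ℕ → H := fun _ => p with hgpdef
    have hgpo : ∀ k, ψ σ q (gp (k+1)) = gp k := fun _ => hfp
    have hwpcont : Continuous (traj σ ψ q gp) := traj_continuous hσ hcoc hgpo
    have hwtraj : IsCompleteTraj (circleFlow σ) ψ q (traj σ ψ q gp) := by
      refine ⟨hwpcont, fun t s ht => ?_⟩
      have h1 := traj_shift hσ hcoc hgpo s (t+s) (by linarith)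
      rwa [add_sub_cancel_right] at h1
    have hwper : ∀ t, traj σ ψ q gp (t + σ) = traj σ ψ q gp t := by
      intro t
      have hk0 : 0 ≤ t + (trajK σ t : ℝ)*σ := trajK_nonneg hσ t
      have e1 := traj_eq hσ hcoc hgpo (trajK σ t) (t+σ) (by linarith)
      have e2 := traj_eq hσ hcoc hgpo (trajK σ t + 1) t (by push_cast; linarith)
      rw [← e1, ← e2]
      have h6 : t + σ + (trajK σ t : ℝ)*σ = t + ((trajK σ t + 1 : ℕ) : ℝ)*σ := by
        push_cast; ring
      rw [h6]
    have hdist : ‖traj σ ψ q gp 0 - v 0‖ < εiso := by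
      rw [traj_zero hσ hcoc hgpo]
      have h7 : ‖gp 0 - v 0‖ ≤ ε₁ := hΩball p hpΩ
      rw [hε₁def] at h7
      linarith
    have h8 := hiso (traj σ ψ q gp) hwtraj hwper hdist
    rwa [traj_zero hσ hcoc hgpo] at h8
  have hmaxv := hfixeq ymax hymaxΩ hfixmax
  have hminv := hfixeq ymin hyminΩ hfixmin
  -- Ω is the singleton {v 0}
  have hΩsingle : ∀ z ∈ Ω, z = v 0 := by
    intro z hz
    by_contra hne
    have hv0Ω : v 0 ∈ Ω := hmaxv ▸ hymaxΩ
    have h1 : ⟪z - v 0, e⟫ ≠ 0 := hpairzero z hz (v 0) hv0Ω hne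
    have h2 : ⟪z, e⟫ ≤ ⟪v 0, e⟫ := hmaxv ▸ hymax hz
    have h3 : ⟪v 0, e⟫ ≤ ⟪z, e⟫ := hminv ▸ hymin hz
    rw [inner_sub_left] at h1
    exact h1 (by linarith)
  -- convergence of the discrete orbit
  have hxconv : Tendsto x atTop (𝓝 (v 0)) := by
    by_contra hnc
    rw [Metric.tendsto_atTop] at hnc
    push_neg at hnc
    obtain ⟨ε, hε, hfreq⟩ := hnc
    set S := {y : H | ε ≤ dist y (v 0)} with hSdef
    have hSclosed : IsClosed S :=
      isClosed_le continuous_const (continuous_id.dist continuous_const)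
    haveI hF2ne : (Filter.map x atTop ⊓ 𝓟 S).NeBot := by
      rw [Filter.inf_principal_neBot_iff]
      intro U hU
      rw [Filter.mem_map, Filter.mem_atTop_sets] at hU
      obtain ⟨N, hN⟩ := hU
      obtain ⟨n, hn, hdist⟩ := hfreq N
      exact ⟨x n, hN n hn, hdist⟩
    obtain ⟨y, _, hycl⟩ := hKcpt (f := Filter.map x atTop ⊓ 𝓟 S) (le_trans inf_le_left hmapK)
    have hyΩ : y ∈ Ω := hycl.mono inf_le_left
    have hyS : y ∈ S := by
      have h1 : ClusterPt y (𝓟 S) := hycl.mono inf_le_right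
      have h2 := mem_closure_iff_clusterPt.mpr h1
      rwa [hSclosed.closure_eq] at h2
    rw [hΩsingle y hyΩ] at hyS
    simp only [hSdef, Set.mem_setOf_eq, dist_self] at hyS
    linarith
  -- conclusion
  rw [Metric.tendsto_atTop]
  intro ε hε
  obtain ⟨η₃, hη₃, hstab₃⟩ := hstable ε hε
  obtain ⟨N, hN⟩ := Metric.tendsto_atTop.mp hxconv η₃ hη₃
  refine ⟨(N:ℝ)*σ, fun t ht => ?_⟩
  have hts : 0 ≤ t - N*σ := by linarith
  have hNσ : 0 ≤ (N:ℝ)*σ := mul_nonneg (Nat.cast_nonneg N) hσ.le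
  have hsplit : ψ t q u₀ = ψ (t - N*σ) q (x N) := by
    have h1 := hcoc.2.1 (t - N*σ) (N*σ) hts hNσ q u₀
    rw [sub_add_cancel, circleFlow_nat] at h1
    exact h1
  have hxN : ‖x N - v 0‖ < η₃ := by
    have := hN N le_rfl
    rwa [dist_eq_norm] at this
  have hd := hstab₃ (x N) hxN (t - N*σ) hts
  have hveq : v t = v (t - N*σ) := by
    have h1 := hvper' (t - N*σ) N
    rwa [sub_add_cancel] at h1
  rw [dist_zero_right, hsplit, hveq]
  exact hd
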